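/- Let N ≥ 1 and let p_1,…,p_N, x_1,…,x_N : ℝ → ℝ be differentiable functions with p_i(t) > 0 and x_1(t) > x_2(t) > ⋯ > x_N(t) for all t, satisfying the Camassa–Holm peakon system: dp_i/dt = −p_i Σ_{j=1}^{i−1} p_j e^{x_i−x_j} + p_i Σ_{j=i+1}^{N} p_j e^{x_j−x_i} and dx_i/dt = Σ_{j=1}^{i−1} p_j e^{x_i−x_j} + p_i + Σ_{j=i+1}^{N} p_j e^{x_j−x_i} for i = 1,…,N. Then the N×N symmetric matrix 𝒜(t) with entries 𝒜(t)_{ij} := √(p_i(t)p_j(t)) e^{(x_{max(i,j)}(t) − x_{min(i,j)}(t))/2} satisfies, entrywise, d𝒜(t)/dt = 𝒜(t)Π(𝒜(t)) − Π(𝒜(t))𝒜(t). -/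

import Mathlib

set_option maxHeartbeats 2000000

open Finset

/-- Strictly lower triangular part of a matrix. -/
def lowerPart {N : ℕ} (M : Matrix (Fin N) (Fin N) ℝ) : Matrix (Fin N) (Fin N) ℝ :=
  Matrix.of fun i j => if j < i then M i j else 0

/-- Strictly upper triangular part of a matrix. -/
def upperPart {N : ℕ} (M : Matrix (Fin N) (Fin N) ℝ) : Matrix (Fin N) (Fin N) ℝ :=
  Matrix.of fun i j => if i < j then M i j else 0

/-- Π(M) := (1/2) M_< − (1/2) M_>. -/
noncomputable def PiMap {N : ℕ} (M : Matrix (Fin N) (Fin N) ℝ) : Matrix (Fin N) (Fin N) ℝ :=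
  (1 / 2 : ℝ) • lowerPart M - (1 / 2 : ℝ) • upperPart M

/-- The semiseparable peakon matrix 𝒜(t). -/
noncomputable def calA {N : ℕ} (p x : Fin N → ℝ → ℝ) (t : ℝ) : Matrix (Fin N) (Fin N) ℝ :=
  Matrix.of fun i j =>
    Real.sqrt (p i t * p j t) * Real.exp ((x (max i j) t - x (min i j) t) / 2)

/-- The per-index term in the commutator expansion. -/
noncomputable def Wterm {N : ℕ} (p x : Fin N → ℝ → ℝ) (t : ℝ) (i j k : Fin N) : ℝ :=
  -(if k < i then p k t * Real.exp (x i t - x k t) else 0)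
  + (if i < k then p k t * Real.exp (x k t - x i t) else 0)
  - (if k < j then p k t * Real.exp (x j t - x k t) else 0)
  + (if j < k then p k t * Real.exp (x k t - x j t) else 0)
  + (if k < max i j then p k t * Real.exp (x (max i j) t - x k t) else 0)
  + (if max i j < k then p k t * Real.exp (x k t - x (max i j) t) else 0)
  + (if k = max i j then p k t else 0)
  - (if k < min i j then p k t * Real.exp (x (min i j) t - x k t) else 0)
  - (if min i j < k then p k t * Real.exp (x k t - x (min i j) t) else 0)
  - (if k = min i j then p k t else 0)

lemma peakon_key {N : ℕ} (p x : Fin N → ℝ → ℝ) (t : ℝ) (hppos : ∀ a, 0 < p a t) (i j k : Fin N) :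
    calA p x t i j * ((1/2) * Wterm p x t i j k)
      = calA p x t i k * PiMap (calA p x t) k j - PiMap (calA p x t) i k * calA p x t k j := by
  have hq : ∀ a b : Fin N, Real.sqrt (p a t * p b t) = Real.sqrt (p a t) * Real.sqrt (p b t) :=
    fun a b => Real.sqrt_mul (hppos a).le _
  have he2 : ∀ a b : Fin N, Real.exp ((x a t - x b t)/2)
      = Real.exp (x a t / 2) / Real.exp (x b t / 2) := by
    intro a b; rw [← Real.exp_sub]; ring_nf
  have he1 : ∀ a b : Fin N, Real.exp (x a t - x b t)
      = (Real.exp (x a t / 2))^2 / (Real.exp (x b t / 2))^2 := by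
    intro a b; rw [Real.exp_sub]; congr 1 <;> rw [sq, ← Real.exp_add] <;> ring_nf
  have hp2 : ∀ a : Fin N, p a t = Real.sqrt (p a t)^2 := fun a => (Real.sq_sqrt (hppos a).le).symm
  have hqne : ∀ a : Fin N, Real.sqrt (p a t) ≠ 0 :=
    fun a => ne_of_gt (Real.sqrt_pos.mpr (hppos a))
  have hene : ∀ a : Fin N, Real.exp (x a t / 2) ≠ 0 := fun a => Real.exp_ne_zero _
  simp only [Wterm, calA, PiMap, lowerPart, upperPart, Matrix.sub_apply, Matrix.smul_apply,
    Matrix.of_apply, smul_eq_mul, hq, he1, he2]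
  rw [hp2 i, hp2 j, hp2 k]
  simp only [Real.sqrt_sq (Real.sqrt_nonneg _)]
  rcases le_total i j with hij | hij
  · simp only [max_eq_right hij, min_eq_left hij, max_def, min_def]
    split_ifs <;> (try subst_vars) <;> first | omega | (field_simp; try ring)
  · simp only [max_eq_left hij, min_eq_right hij, max_def, min_def]
    split_ifs <;> (try subst_vars) <;> first | omega | (field_simp; try ring)

lemma sqrt_div_aux {a b : ℝ} (d e : ℝ) (ha : 0 < a) (hb : 0 < b) :
    (d * b + a * e) / (2 * Real.sqrt (a * b))
      = Real.sqrt (a * b) * (d / (2 * a) + e / (2 * b)) := by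
  have ha2 : Real.sqrt a * Real.sqrt a = a := Real.mul_self_sqrt ha.le
  have hb2 : Real.sqrt b * Real.sqrt b = b := Real.mul_self_sqrt hb.le
  have hsne : Real.sqrt (a*b) ≠ 0 := ne_of_gt (Real.sqrt_pos.mpr (by positivity))
  have hab : Real.sqrt (b*a) ^ 2 = b*a := Real.sq_sqrt (by positivity)
  field_simp
  linear_combination -(d*b + a*e) * hab

lemma peakon_deriv {N : ℕ} (p x : Fin N → ℝ → ℝ)
    (hpdiff : ∀ i, Differentiable ℝ (p i)) (hxdiff : ∀ i, Differentiable ℝ (x i))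
    (hppos : ∀ i t, 0 < p i t) (i j : Fin N) (t : ℝ) :
    deriv (fun s => calA p x s i j) t
      = Real.sqrt (p i t * p j t) * Real.exp ((x (max i j) t - x (min i j) t) / 2)
        * (deriv (p i) t / (2 * p i t) + deriv (p j) t / (2 * p j t)
           + (deriv (x (max i j)) t - deriv (x (min i j)) t) / 2) := by
  have hgpos : 0 < p i t * p j t := mul_pos (hppos i t) (hppos j t)
  have h1 : HasDerivAt (fun s => p i s * p j s)
      (deriv (p i) t * p j t + p i t * deriv (p j) t) t :=
    ((hpdiff i t).hasDerivAt).mul ((hpdiff j t).hasDerivAt)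
  have h2 := h1.sqrt hgpos.ne'
  have h3 : HasDerivAt (fun s => (x (max i j) s - x (min i j) s) / 2)
      ((deriv (x (max i j)) t - deriv (x (min i j)) t) / 2) t :=
    (((hxdiff (max i j) t).hasDerivAt).sub ((hxdiff (min i j) t).hasDerivAt)).div_const 2
  have h4 := h2.mul h3.exp
  have h5 := h4.deriv
  simp only [calA, Matrix.of_apply]
  rw [show (fun s => Real.sqrt (p i s * p j s) * Real.exp ((x (max i j) s - x (min i j) s) / 2))
      = ((fun y => Real.sqrt (p i y * p j y)) * fun s => Real.exp ((x (max i j) s - x (min i j) s) / 2))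
      from rfl, h5]
  rw [sqrt_div_aux (deriv (p i) t) (deriv (p j) t) (hppos i t) (hppos j t)]
  ring

theorem stmt0 (N : ℕ) (hN : 1 ≤ N) (p x : Fin N → ℝ → ℝ)
    (hpdiff : ∀ i, Differentiable ℝ (p i))
    (hxdiff : ∀ i, Differentiable ℝ (x i))
    (hppos : ∀ i t, 0 < p i t)
    (hxord : ∀ (i j : Fin N), i < j → ∀ t : ℝ, x j t < x i t)
    (hpeq : ∀ (i : Fin N) (t : ℝ), deriv (p i) t =
      -(p i t) * ∑ j ∈ Finset.univ.filter (fun j => j < i),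
          p j t * Real.exp (x i t - x j t)
        + p i t * ∑ j ∈ Finset.univ.filter (fun j => i < j),
          p j t * Real.exp (x j t - x i t))
    (hxeq : ∀ (i : Fin N) (t : ℝ), deriv (x i) t =
      (∑ j ∈ Finset.univ.filter (fun j => j < i), p j t * Real.exp (x i t - x j t))
        + p i t
        + ∑ j ∈ Finset.univ.filter (fun j => i < j), p j t * Real.exp (x j t - x i t)) :
    ∀ (t : ℝ) (i j : Fin N),
      deriv (fun s => calA p x s i j) t
        = (calA p x t * PiMap (calA p x t) - PiMap (calA p x t) * calA p x t) i j := by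
  intro t i j
  have hbracket : deriv (p i) t / (2 * p i t) + deriv (p j) t / (2 * p j t)
      + (deriv (x (max i j)) t - deriv (x (min i j)) t) / 2
      = (1/2) * ∑ k, Wterm p x t i j k := by
    have hsum : ∑ k, Wterm p x t i j k
        = -(∑ k ∈ Finset.univ.filter (fun k => k < i), p k t * Real.exp (x i t - x k t))
          + (∑ k ∈ Finset.univ.filter (fun k => i < k), p k t * Real.exp (x k t - x i t))
          - (∑ k ∈ Finset.univ.filter (fun k => k < j), p k t * Real.exp (x j t - x k t))
          + (∑ k ∈ Finset.univ.filter (fun k => j < k), p k t * Real.exp (x k t - x j t))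
          + (∑ k ∈ Finset.univ.filter (fun k => k < max i j),
              p k t * Real.exp (x (max i j) t - x k t))
          + (∑ k ∈ Finset.univ.filter (fun k => max i j < k),
              p k t * Real.exp (x k t - x (max i j) t))
          + p (max i j) t
          - (∑ k ∈ Finset.univ.filter (fun k => k < min i j),
              p k t * Real.exp (x (min i j) t - x k t))
          - (∑ k ∈ Finset.univ.filter (fun k => min i j < k),
              p k t * Real.exp (x k t - x (min i j) t))
          - p (min i j) t := by
      simp only [Wterm, Finset.sum_add_distrib, Finset.sum_sub_distrib, Finset.sum_neg_distrib,
        ← Finset.sum_filter, Finset.sum_ite_eq', Finset.mem_univ, if_true]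
      simp only [Finset.filter_eq', Finset.mem_univ, if_true, Finset.sum_singleton]
    rw [hsum, hpeq i t, hpeq j t, hxeq (max i j) t, hxeq (min i j) t]
    have h1 := (hppos i t).ne'
    have h2 := (hppos j t).ne'
    field_simp
    ring
  have hrhs : (calA p x t * PiMap (calA p x t) - PiMap (calA p x t) * calA p x t) i j
      = ∑ k, (calA p x t i k * PiMap (calA p x t) k j
          - PiMap (calA p x t) i k * calA p x t k j) := by
    simp [Matrix.sub_apply, Matrix.mul_apply, Finset.sum_sub_distrib]
  have hkeyk : ∀ k : Fin N, calA p x t i k * PiMap (calA p x t) k j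
      - PiMap (calA p x t) i k * calA p x t k j
      = calA p x t i j * ((1/2) * Wterm p x t i j k) :=
    fun k => (peakon_key p x t (fun a => hppos a t) i j k).symm
  rw [peakon_deriv p x hpdiff hxdiff hppos i j t, hrhs]
  simp only [hkeyk]
  rw [← Finset.mul_sum, ← Finset.mul_sum]
  rw [show (calA p x t i j : ℝ)
      = Real.sqrt (p i t * p j t) * Real.exp ((x (max i j) t - x (min i j) t) / 2) from rfl]
  rw [hbracket]
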